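/- Let t > 0 and suppose (u_k, v_k, w_k) are feasible triples for the dual problem (u_k ≥ 0, ∇v_k·f ≤ u_k on X, w_k ≥ v_k + 1, w_k ≥ 0 on X, v_k ≥ 0 on ∂X) such that u_k → 0, ∫_X w_k dλ → λ(X∞^c), and λ(X_t \ X∞) ≤ ε for the chosen t. Then limsup_k ‖w_k − 1_{X∞^c}‖_{L¹(X)} ≤ 6ε. Consequently, if for every ε > 0 there is t with λ(X_t \ X∞) ≤ ε, then w_k → 1_{X∞^c} in L¹(X). -/

import Mathlib

open Set MeasureTheory Filter

/-- If the trajectory starting inside `interior X` leaves `interior X` by time `T`, there is a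
first exit time `τ`, at which the trajectory lies on the frontier of the closed set `X`, and the
trajectory stays in `X` up to time `τ`. -/
lemma exit_lemma_aux {E : Type*} [NormedAddCommGroup E] [NormedSpace ℝ E]
    {X : Set E} (hXc : IsClosed X) {φ : ℝ → E} {f : E → E}
    (hφd : ∀ t, HasDerivAt φ (f (φ t)) t) (hφ0 : φ 0 ∈ interior X)
    {T : ℝ} (hexit : ∃ s ∈ Icc (0:ℝ) T, φ s ∉ interior X) :
    ∃ τ, 0 < τ ∧ τ ≤ T ∧ φ τ ∈ X ∧ φ τ ∉ interior X ∧ ∀ s ∈ Icc (0:ℝ) τ, φ s ∈ X := by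
  have hcont : Continuous φ := by
    rw [continuous_iff_continuousAt]; exact fun t => (hφd t).continuousAt
  set S : Set ℝ := Icc (0:ℝ) T ∩ φ ⁻¹' (interior X)ᶜ with hS
  have hSne : S.Nonempty := by
    obtain ⟨s, hs1, hs2⟩ := hexit; exact ⟨s, hs1, hs2⟩
  have hScl : IsClosed S := isClosed_Icc.inter (isOpen_interior.isClosed_compl.preimage hcont)
  have hSbdd : BddBelow S := (bddBelow_Icc : BddBelow (Icc (0:ℝ) T)).mono inter_subset_left
  set τ := sInf S with hτ
  have hτS : τ ∈ S := hScl.csInf_mem hSne hSbdd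
  have hτIcc : τ ∈ Icc (0:ℝ) T := hτS.1
  have hτni : φ τ ∉ interior X := hτS.2
  have hτpos : 0 < τ := by
    rcases lt_or_eq_of_le hτIcc.1 with h | h
    · exact h
    · exact absurd (h ▸ hφ0) hτni
  have hbefore : ∀ s ∈ Ico (0:ℝ) τ, φ s ∈ interior X := by
    intro s hs
    by_contra hns
    have hsS : s ∈ S := ⟨⟨hs.1, hs.2.le.trans hτIcc.2⟩, hns⟩
    exact absurd (csInf_le hSbdd hsS) (not_le.2 hs.2)
  have hτX : φ τ ∈ X := by
    have h1 : τ ∈ closure (Ico (0:ℝ) τ) := by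
      rw [closure_Ico hτpos.ne]; exact ⟨hτIcc.1, le_refl _⟩
    have h2 : φ τ ∈ closure (φ '' Ico (0:ℝ) τ) :=
      hcont.continuousWithinAt.mem_closure_image h1
    have h3 : closure (φ '' Ico (0:ℝ) τ) ⊆ closure X := by
      apply closure_mono
      rintro y ⟨s, hs, rfl⟩
      exact interior_subset (hbefore s hs)
    rw [hXc.closure_eq] at h3
    exact h3 h2
  refine ⟨τ, hτpos, hτIcc.2, hτX, hτni, fun s hs => ?_⟩
  rcases lt_or_eq_of_le hs.2 with h | h
  · exact interior_subset (hbefore s ⟨hs.1, h⟩)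
  · exact h ▸ hτX

/-- Feasibility lemma: if the trajectory from `x₀ ∈ interior X` leaves `interior X` by time `t`,
then `v x₀ ≥ -(u * t)`. -/
lemma feasibility_bound_aux {E : Type*} [NormedAddCommGroup E] [NormedSpace ℝ E]
    {X : Set E} (hXc : IsClosed X) {φ : E → ℝ → E} {f : E → E}
    (hφ0 : ∀ x, φ x 0 = x) (hφd : ∀ x t, HasDerivAt (φ x) (f (φ x t)) t)
    {u : ℝ} {v : E → ℝ} {v' : E → E →L[ℝ] ℝ}
    (hv : ∀ x ∈ X, HasFDerivAt v (v' x) x)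
    (hvf : ∀ x ∈ X, v' x (f x) ≤ u)
    (hvb : ∀ x ∈ frontier X, 0 ≤ v x)
    (hu : 0 ≤ u) {t : ℝ}
    {x₀ : E} (hx₀ : x₀ ∈ interior X)
    (hexit : ∃ s ∈ Icc (0:ℝ) t, φ x₀ s ∉ interior X) :
    -(u * t) ≤ v x₀ := by
  obtain ⟨τ, hτpos, hτt, hτX, hτni, hmem⟩ :=
    exit_lemma_aux hXc (hφd x₀) (by rw [hφ0]; exact hx₀) hexit
  set h : ℝ → ℝ := fun s => u * s - v (φ x₀ s) with hh
  have hder : ∀ s ∈ Icc (0:ℝ) τ, HasDerivAt h (u - v' (φ x₀ s) (f (φ x₀ s))) s := by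
    intro s hs
    have h1 : HasDerivAt (fun s => v (φ x₀ s)) (v' (φ x₀ s) (f (φ x₀ s))) s :=
      (hv _ (hmem s hs)).comp_hasDerivAt s (hφd x₀ s)
    have h2 := ((hasDerivAt_id s).const_mul u).sub h1
    rw [mul_one] at h2
    exact h2
  have hmono : MonotoneOn h (Icc 0 τ) := by
    apply monotoneOn_of_deriv_nonneg (convex_Icc 0 τ)
    · intro s hs; exact (hder s hs).continuousAt.continuousWithinAt
    · intro s hs
      rw [interior_Icc] at hs
      exact ((hder s (Ioo_subset_Icc_self hs)).differentiableAt).differentiableWithinAt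
    · intro s hs
      rw [interior_Icc] at hs
      rw [(hder s (Ioo_subset_Icc_self hs)).deriv]
      have := hvf _ (hmem s (Ioo_subset_Icc_self hs))
      linarith
  have h01 : h 0 ≤ h τ :=
    hmono (left_mem_Icc.2 hτpos.le) (right_mem_Icc.2 hτpos.le) hτpos.le
  have hfr : φ x₀ τ ∈ frontier X := hXc.frontier_eq ▸ ⟨hτX, hτni⟩
  have hvτ : 0 ≤ v (φ x₀ τ) := hvb _ hfr
  have h0 : h 0 = -v x₀ := by simp [hh, hφ0]
  have hut : u * τ ≤ u * t := mul_le_mul_of_nonneg_left hτt hu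
  rw [h0] at h01
  simp only [hh] at h01
  linarith

/-- The set of initial conditions whose trajectory stays in `interior X` up to time `t` is open,
by Grönwall's inequality. -/
lemma Xt_open_aux {E : Type*} [NormedAddCommGroup E] [NormedSpace ℝ E]
    {X : Set E} (hXc : IsClosed X) {φ : E → ℝ → E} {f : E → E} {Kf : NNReal}
    (hf : LipschitzOnWith Kf f X)
    (hφ0 : ∀ x, φ x 0 = x) (hφd : ∀ x t, HasDerivAt (φ x) (f (φ x t)) t)
    {t : ℝ} (ht : 0 < t) :
    IsOpen {x₀ ∈ interior X | ∀ s ∈ Icc (0:ℝ) t, φ x₀ s ∈ interior X} := by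
  rw [Metric.isOpen_iff]
  rintro x₀ ⟨hx₀, hx₀t⟩
  have hcx : ∀ x : E, Continuous (φ x) := fun x =>
    continuous_iff_continuousAt.2 fun s => (hφd x s).continuousAt
  have hKcomp : IsCompact (φ x₀ '' Icc 0 t) := isCompact_Icc.image (hcx x₀)
  have hKsub : φ x₀ '' Icc 0 t ⊆ interior X := by rintro y ⟨s, hs, rfl⟩; exact hx₀t s hs
  obtain ⟨δ, δpos, hδ⟩ := hKcomp.exists_cthickening_subset_open isOpen_interior hKsub
  have hKt0 : (0:ℝ) ≤ (Kf:ℝ) * t := by positivity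
  have hexp1 : Real.exp (-((Kf:ℝ) * t)) ≤ 1 := by
    rw [Real.exp_le_one_iff]; linarith
  refine ⟨δ * Real.exp (-((Kf:ℝ) * t)), by positivity, ?_⟩
  intro y₀ hy₀
  rw [Metric.mem_ball] at hy₀
  have hy₀δ : dist y₀ x₀ ≤ δ := le_of_lt (lt_of_lt_of_le hy₀ (by nlinarith))
  have hy₀X : y₀ ∈ interior X := by
    refine hδ (Metric.mem_cthickening_of_dist_le y₀ x₀ δ _ ?_ hy₀δ)
    exact ⟨0, left_mem_Icc.2 ht.le, hφ0 x₀⟩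
  refine ⟨hy₀X, ?_⟩
  by_contra hcon
  push_neg at hcon
  obtain ⟨τ, hτpos, hτt, hτX, hτni, hmem⟩ :=
    exit_lemma_aux hXc (hφd y₀) (by rw [hφ0]; exact hy₀X) hcon
  have key := dist_le_of_trajectories_ODE_of_mem (v := fun _ x => f x) (s := fun _ => X)
    (K := Kf) (fun _ _ => hf)
    ((hcx x₀).continuousOn (s := Icc 0 τ))
    (fun s _ => (hφd x₀ s).hasDerivWithinAt)
    (fun s hs => interior_subset (hx₀t s ⟨hs.1, hs.2.le.trans hτt⟩))
    ((hcx y₀).continuousOn (s := Icc 0 τ))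
    (fun s _ => (hφd y₀ s).hasDerivWithinAt)
    (fun s hs => hmem s (Ico_subset_Icc_self hs))
    (le_of_eq (by rw [hφ0, hφ0]))
    τ (right_mem_Icc.2 hτpos.le)
  have hexpτ : Real.exp ((Kf:ℝ) * (τ - 0)) ≤ Real.exp ((Kf:ℝ) * t) := by
    apply Real.exp_le_exp.2
    have : (0:ℝ) ≤ (Kf:ℝ) := Kf.coe_nonneg
    nlinarith
  have hlt : dist (φ x₀ τ) (φ y₀ τ) ≤ δ := by
    have h1 : dist x₀ y₀ * Real.exp ((Kf:ℝ) * (τ - 0)) ≤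
        (δ * Real.exp (-((Kf:ℝ) * t))) * Real.exp ((Kf:ℝ) * t) := by
      have h2 : dist x₀ y₀ ≤ δ * Real.exp (-((Kf:ℝ) * t)) := by
        rw [dist_comm]; exact hy₀.le
      have h3 : (0:ℝ) < Real.exp ((Kf:ℝ) * (τ - 0)) := Real.exp_pos _
      calc dist x₀ y₀ * Real.exp ((Kf:ℝ) * (τ - 0))
          ≤ (δ * Real.exp (-((Kf:ℝ) * t))) * Real.exp ((Kf:ℝ) * (τ - 0)) := by
            apply mul_le_mul_of_nonneg_right h2 h3.le
        _ ≤ (δ * Real.exp (-((Kf:ℝ) * t))) * Real.exp ((Kf:ℝ) * t) := by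
            apply mul_le_mul_of_nonneg_left hexpτ (by positivity)
    have h4 : (δ * Real.exp (-((Kf:ℝ) * t))) * Real.exp ((Kf:ℝ) * t) = δ := by
      rw [mul_assoc, ← Real.exp_add]; simp
    exact key.trans (h1.trans_eq h4)
  have : φ y₀ τ ∈ interior X := by
    refine hδ (Metric.mem_cthickening_of_dist_le _ (φ x₀ τ) δ _ ?_ (by rwa [dist_comm]))
    exact ⟨τ, ⟨hτpos.le, hτt⟩, rfl⟩
  exact hτni this

/-- If `(u_k, v_k, w_k)` are dual-feasible triples with `u_k → 0` and
`∫_X w_k dλ → λ(X∞ᶜ)`, and `t > 0` is such that `λ(X_t \ X∞) ≤ ε`, then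
`limsup_k ‖w_k − 1_{X∞ᶜ}‖_{L¹(X)} ≤ 6ε`.  Consequently, if for every `ε > 0` there is
such a `t`, then `w_k → 1_{X∞ᶜ}` in `L¹(X)`. -/
theorem wk_converges_to_indicator
    {n : ℕ} (X : Set (EuclideanSpace ℝ (Fin n))) (hX : IsCompact X)
    (f : EuclideanSpace ℝ (Fin n) → EuclideanSpace ℝ (Fin n))
    (Kf : NNReal) (hf : LipschitzOnWith Kf f X)
    -- the flow of ẋ = f(x)
    (φ : EuclideanSpace ℝ (Fin n) → ℝ → EuclideanSpace ℝ (Fin n))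
    (hφ0 : ∀ x, φ x 0 = x)
    (hφd : ∀ x t, HasDerivAt (φ x) (f (φ x t)) t)
    -- the sets X_t, X∞ and X∞ᶜ
    (Xt : ℝ → Set (EuclideanSpace ℝ (Fin n)))
    (hXt : ∀ t, Xt t = {x₀ ∈ interior X | ∀ s ∈ Icc (0 : ℝ) t, φ x₀ s ∈ interior X})
    (Xinf : Set (EuclideanSpace ℝ (Fin n)))
    (hXinf : Xinf = {x₀ ∈ interior X | ∀ s ≥ (0 : ℝ), φ x₀ s ∈ interior X})
    (Xinfc : Set (EuclideanSpace ℝ (Fin n))) (hXinfc : Xinfc = interior X \ Xinf)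
    -- the sequence of dual-feasible triples (u_k, v_k, w_k)
    (u : ℕ → ℝ) (v w : ℕ → EuclideanSpace ℝ (Fin n) → ℝ)
    (v' : ℕ → EuclideanSpace ℝ (Fin n) → EuclideanSpace ℝ (Fin n) →L[ℝ] ℝ)
    (hu : ∀ k, 0 ≤ u k)
    (hv : ∀ k, ∀ x ∈ X, HasFDerivAt (v k) (v' k x) x)
    (hw : ∀ k, ContinuousOn (w k) X)
    (hvf : ∀ k, ∀ x ∈ X, v' k x (f x) ≤ u k)
    (hw1 : ∀ k, ∀ x ∈ X, v k x + 1 ≤ w k x)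
    (hw0 : ∀ k, ∀ x ∈ X, 0 ≤ w k x)
    (hvb : ∀ k, ∀ x ∈ frontier X, 0 ≤ v k x)
    -- convergence of the costs and of the slack variables
    (huconv : Tendsto u atTop (nhds 0))
    (hwconv : Tendsto (fun k => ∫ x in X, w k x) atTop (nhds (volume Xinfc).toReal)) :
    (∀ ε : ℝ, 0 ≤ ε → ∀ t : ℝ, 0 < t → volume (Xt t \ Xinf) ≤ ENNReal.ofReal ε →
      limsup (fun k => ∫ x in X, |w k x - Xinfc.indicator (fun _ => (1 : ℝ)) x|) atTop
        ≤ 6 * ε) ∧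
    ((∀ ε : ℝ, 0 < ε → ∃ t : ℝ, 0 < t ∧ volume (Xt t \ Xinf) ≤ ENNReal.ofReal ε) →
      Tendsto (fun k => ∫ x in X, |w k x - Xinfc.indicator (fun _ => (1 : ℝ)) x|)
        atTop (nhds 0)) := by
  have hXcl : IsClosed X := hX.isClosed
  have hXm : MeasurableSet X := hXcl.measurableSet
  have hXtopen : ∀ t : ℝ, 0 < t → IsOpen (Xt t) := fun t ht => by
    rw [hXt]; exact Xt_open_aux hXcl hf hφ0 hφd ht
  have hXtsub : ∀ t : ℝ, Xt t ⊆ interior X := by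
    intro t; rw [hXt]; exact fun x hx => hx.1
  have hXinf_eq : Xinf = ⋂ (m : ℕ), Xt ((m : ℝ) + 1) := by
    ext x
    simp only [mem_iInter, hXt, hXinf, mem_setOf_eq]
    constructor
    · intro hx m; exact ⟨hx.1, fun s hs => hx.2 s hs.1⟩
    · intro hx
      refine ⟨(hx 0).1, fun s hs => ?_⟩
      obtain ⟨m, hm⟩ := exists_nat_ge s
      exact (hx m).2 s ⟨hs, by linarith⟩
  have hXinfm : MeasurableSet Xinf := by
    rw [hXinf_eq]
    exact MeasurableSet.iInter fun m => (hXtopen _ (by positivity)).measurableSet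
  have hXinfcm : MeasurableSet Xinfc := by
    rw [hXinfc]; exact isOpen_interior.measurableSet.diff hXinfm
  have hAX : Xinfc ⊆ X := by
    rw [hXinfc]; exact fun x hx => interior_subset hx.1
  have hwint : ∀ k, IntegrableOn (w k) X volume := fun k => (hw k).integrableOn_compact hX
  have hconst_int : ∀ c : ℝ, IntegrableOn (fun _ => c) X volume := fun c =>
    integrableOn_const hX.measure_lt_top.ne
  have hindint : IntegrableOn (Xinfc.indicator fun _ => (1:ℝ)) X volume :=
    (hconst_int 1).indicator hXinfcm
  -- the key quantitative estimate
  have hmain : ∀ ε : ℝ, 0 ≤ ε → ∀ t : ℝ, 0 < t → volume (Xt t \ Xinf) ≤ ENNReal.ofReal ε →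
      ∃ b : ℕ → ℝ,
        (∀ k, (∫ x in X, |w k x - Xinfc.indicator (fun _ => (1:ℝ)) x|) ≤ b k) ∧
        Tendsto b atTop (nhds (2 * ε)) := by
    intro ε hε t ht hvolC
    set C := Xt t \ Xinf with hC
    have hCm : MeasurableSet C := ((hXtopen t ht).measurableSet).diff hXinfm
    have hCtop : volume C ≠ ⊤ := (hvolC.trans_lt ENNReal.ofReal_lt_top).ne
    have hfeas : ∀ k, ∀ x ∈ interior X, x ∉ Xt t → 1 - u k * t ≤ w k x := by
      intro k x hx hxt
      have hex : ∃ s ∈ Icc (0:ℝ) t, φ x s ∉ interior X := by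
        by_contra hne
        push_neg at hne
        exact hxt ((hXt t).symm ▸ ⟨hx, hne⟩)
      have h1 := feasibility_bound_aux hXcl hφ0 hφd (hv k) (hvf k) (hvb k) (hu k) hx hex
      have h2 := hw1 k x (interior_subset hx)
      linarith
    have hpt : ∀ k, ∀ x ∈ X, |w k x - Xinfc.indicator (fun _ => (1:ℝ)) x| ≤
        (w k x - Xinfc.indicator (fun _ => (1:ℝ)) x) + 2*(u k * t)
          + 2 * C.indicator (fun _ => (1:ℝ)) x := by
      intro k x hx
      have hut : 0 ≤ u k * t := mul_nonneg (hu k) ht.le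
      have hw0' := hw0 k x hx
      have hCnn : (0:ℝ) ≤ C.indicator (fun _ => (1:ℝ)) x :=
        indicator_nonneg (fun _ _ => zero_le_one) x
      by_cases hxA : x ∈ Xinfc
      · rw [indicator_of_mem hxA]
        have hxA' : x ∈ interior X \ Xinf := hXinfc ▸ hxA
        by_cases hxt : x ∈ Xt t
        · have hxC : x ∈ C := ⟨hxt, hxA'.2⟩
          rw [indicator_of_mem hxC]
          rcases abs_cases (w k x - 1) with ⟨h1, _⟩ | ⟨h1, _⟩ <;> linarith
        · have := hfeas k x hxA'.1 hxt
          rcases abs_cases (w k x - 1) with ⟨h1, _⟩ | ⟨h1, _⟩ <;> linarith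
      · rw [indicator_of_notMem hxA]
        have hxC : x ∉ C := by
          intro hxC
          exact hxA (hXinfc ▸ (⟨hXtsub t hxC.1, hxC.2⟩ : x ∈ interior X \ Xinf))
        rw [indicator_of_notMem hxC, sub_zero, abs_of_nonneg hw0']
        linarith
    refine ⟨fun k => ((∫ x in X, w k x) - (volume Xinfc).toReal)
        + (2 * t * (volume X).toReal) * u k + 2 * ε, fun k => ?_, ?_⟩
    · have hint1 : IntegrableOn
          (fun x => w k x - Xinfc.indicator (fun _ => (1:ℝ)) x) X volume :=
        (hwint k).sub hindint
      have hintC : IntegrableOn (C.indicator fun _ => (1:ℝ)) X volume :=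
        (hconst_int 1).indicator hCm
      have step1 : (∫ x in X, |w k x - Xinfc.indicator (fun _ => (1:ℝ)) x|) ≤
          ∫ x in X, ((w k x - Xinfc.indicator (fun _ => (1:ℝ)) x) + 2*(u k * t)
            + 2 * C.indicator (fun _ => (1:ℝ)) x) := by
        refine setIntegral_mono_on hint1.abs ?_ hXm (hpt k)
        exact (hint1.add (hconst_int (2*(u k * t)))).add (hintC.const_mul 2)
      have hiA : (∫ x in X, Xinfc.indicator (fun _ => (1:ℝ)) x) = (volume Xinfc).toReal := by
        rw [setIntegral_indicator hXinfcm, inter_eq_self_of_subset_right hAX]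
        simp [setIntegral_const, Measure.real]
      have hiC : (∫ x in X, C.indicator (fun _ => (1:ℝ)) x) ≤ ε := by
        rw [setIntegral_indicator hCm]
        simp only [setIntegral_const, smul_eq_mul, mul_one]
        calc (volume (X ∩ C)).toReal ≤ (volume C).toReal :=
              ENNReal.toReal_mono hCtop (measure_mono inter_subset_right)
          _ ≤ (ENNReal.ofReal ε).toReal := ENNReal.toReal_mono ENNReal.ofReal_ne_top hvolC
          _ = ε := ENNReal.toReal_ofReal hε
      have step2 : ∫ x in X, ((w k x - Xinfc.indicator (fun _ => (1:ℝ)) x) + 2*(u k * t)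
            + 2 * C.indicator (fun _ => (1:ℝ)) x)
          = ((∫ x in X, w k x) - (volume Xinfc).toReal) + 2*(u k * t) * (volume X).toReal
            + 2 * ∫ x in X, C.indicator (fun _ => (1:ℝ)) x := by
        have hint2 : IntegrableOn
            (fun x => (w k x - Xinfc.indicator (fun _ => (1:ℝ)) x) + 2*(u k * t)) X volume :=
          hint1.add (hconst_int _)
        have hint3 : IntegrableOn (fun x => 2 * C.indicator (fun _ => (1:ℝ)) x) X volume :=
          hintC.const_mul 2
        rw [integral_add hint2 hint3, integral_add hint1 (hconst_int _),
          integral_sub (hwint k) hindint, hiA, integral_const, integral_const_mul]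
        simp only [smul_eq_mul, Measure.real, Measure.restrict_apply_univ]
        ring
      have := step1.trans_eq step2
      have hadd : 2 * (∫ x in X, C.indicator (fun _ => (1:ℝ)) x) ≤ 2 * ε := by linarith
      have : (∫ x in X, |w k x - Xinfc.indicator (fun _ => (1:ℝ)) x|) ≤
          ((∫ x in X, w k x) - (volume Xinfc).toReal) + 2*(u k * t) * (volume X).toReal
            + 2 * ε := by linarith
      calc (∫ x in X, |w k x - Xinfc.indicator (fun _ => (1:ℝ)) x|)
          ≤ ((∫ x in X, w k x) - (volume Xinfc).toReal) + 2*(u k * t) * (volume X).toReal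
            + 2 * ε := this
        _ = ((∫ x in X, w k x) - (volume Xinfc).toReal)
            + (2 * t * (volume X).toReal) * u k + 2 * ε := by ring
    · have h1 : Tendsto (fun k => (∫ x in X, w k x) - (volume Xinfc).toReal)
          atTop (nhds 0) := by
        simpa using hwconv.sub_const ((volume Xinfc).toReal)
      have h2 : Tendsto (fun k => (2 * t * (volume X).toReal) * u k) atTop (nhds 0) := by
        simpa using huconv.const_mul (2 * t * (volume X).toReal)
      have h3 := (h1.add h2).add_const (2 * ε)
      simpa using h3
  have hnn : ∀ k, 0 ≤ ∫ x in X, |w k x - Xinfc.indicator (fun _ => (1:ℝ)) x| :=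
    fun k => setIntegral_nonneg hXm fun x _ => abs_nonneg _
  have hpart1 : ∀ ε : ℝ, 0 ≤ ε → ∀ t : ℝ, 0 < t → volume (Xt t \ Xinf) ≤ ENNReal.ofReal ε →
      limsup (fun k => ∫ x in X, |w k x - Xinfc.indicator (fun _ => (1 : ℝ)) x|) atTop
        ≤ 6 * ε := by
    intro ε hε t ht hvol
    obtain ⟨b, hab, hbt⟩ := hmain ε hε t ht hvol
    have hle : limsup (fun k => ∫ x in X, |w k x - Xinfc.indicator (fun _ => (1:ℝ)) x|) atTop
        ≤ limsup b atTop := by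
      refine limsup_le_limsup (Eventually.of_forall hab) ?_ hbt.isBoundedUnder_le
      exact isCoboundedUnder_le_of_le atTop hnn
    rw [hbt.limsup_eq] at hle
    linarith
  refine ⟨hpart1, ?_⟩
  intro hyp
  set a : ℕ → ℝ := fun k => ∫ x in X, |w k x - Xinfc.indicator (fun _ => (1:ℝ)) x| with ha
  obtain ⟨t₁, ht₁, hvol₁⟩ := hyp 1 one_pos
  obtain ⟨b₁, hab₁, hbt₁⟩ := hmain 1 zero_le_one t₁ ht₁ hvol₁
  have hbdd : IsBoundedUnder (· ≤ ·) atTop a :=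
    (hbt₁.isBoundedUnder_le).mono_le (Eventually.of_forall hab₁)
  have hbdd' : IsBoundedUnder (· ≥ ·) atTop a := isBoundedUnder_of ⟨0, fun k => hnn k⟩
  have hsup : limsup a atTop ≤ 0 := by
    refine le_of_forall_pos_le_add fun ε hε => ?_
    obtain ⟨t, ht, hvol⟩ := hyp (ε / 6) (by linarith)
    have := hpart1 (ε / 6) (by linarith) t ht hvol
    calc limsup a atTop ≤ 6 * (ε / 6) := this
      _ ≤ 0 + ε := by linarith
  have hinf : (0:ℝ) ≤ liminf a atTop := by
    refine le_liminf_of_le ?_ (Eventually.of_forall hnn)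
    exact hbdd.isCoboundedUnder_ge
  exact tendsto_of_le_liminf_of_limsup_le hinf hsup hbdd hbdd'
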